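/- Let m, n ≥ 1, N = m + n, and consider the QBM Hamiltonian on (ℂ²)^{⊗N} ≅ ℂ^{2^m}⊗ℂ^{2^n}: H = −∑_{i=1}^{N} b_i σ^z_i − ∑_{1 ≤ j < i ≤ N} w_{ij} σ^z_i σ^z_j − ∑_{i=1}^{N} Γ_i σ^x_i, with real parameters b_i, w_{ij}, Γ_i. Then H is block diagonal with respect to the first factor ℂ^{2^m} (i.e. the QBM with m visible and n hidden units is a CQ-LVM) if and only if Γ_i = 0 for every visible index i ≤ m. -/

import Mathlib

open Matrix
open scoped Kronecker ComplexOrder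

noncomputable section

/-- The partial trace over the second tensor factor. -/
def ptrace {dA dB : ℕ} (ρ : Matrix (Fin dA × Fin dB) (Fin dA × Fin dB) ℂ) :
    Matrix (Fin dA) (Fin dA) ℂ :=
  Matrix.of fun a a' => ∑ b : Fin dB, ρ (a, b) (a', b)

/-- Matrix logarithm of a Hermitian matrix, applying the real logarithm to the
eigenvalues in a spectral decomposition (junk value `0` for non-Hermitian input). -/
def mlog {n : Type*} [Fintype n] [DecidableEq n] (A : Matrix n n ℂ) : Matrix n n ℂ :=
  if h : A.IsHermitian then h.cfc Real.log else 0

open Classical in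
/-- The positive semidefinite square root (junk value `0` otherwise). -/
def msqrt {n : Type*} [Fintype n] [DecidableEq n] (A : Matrix n n ℂ) : Matrix n n ℂ :=
  if h : A.PosSemidef then
    h.1.eigenvectorUnitary.1 * diagonal ((↑) ∘ (√·) ∘ h.1.eigenvalues) *
      (star h.1.eigenvectorUnitary : Matrix n n ℂ)
  else 0

/-- A density matrix: Hermitian positive semidefinite with trace one. -/
def IsDensityMatrix {n : Type*} [Fintype n] [DecidableEq n] (A : Matrix n n ℂ) : Prop :=
  A.PosSemidef ∧ A.trace = 1

/-- The von Neumann entropy `S(A) = -Tr(A log A)`. -/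
def vnEntropy {n : Type*} [Fintype n] [DecidableEq n] (A : Matrix n n ℂ) : ℂ :=
  -(A * mlog A).trace

/-- The Umegaki relative entropy `D(ω‖ρ) = Tr(ω log ω) - Tr(ω log ρ)`. -/
def relEnt {n : Type*} [Fintype n] [DecidableEq n] (ω ρ : Matrix n n ℂ) : ℂ :=
  (ω * mlog ω).trace - (ω * mlog ρ).trace

/-- The Petz recovery map for the partial trace:
`R_ρ(ω) = ρ^{1/2} ((ρ_A^{-1/2} ω ρ_A^{-1/2}) ⊗ I_B) ρ^{1/2}`. -/
def petz {dA dB : ℕ} (ρ : Matrix (Fin dA × Fin dB) (Fin dA × Fin dB) ℂ)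
    (ω : Matrix (Fin dA) (Fin dA) ℂ) : Matrix (Fin dA × Fin dB) (Fin dA × Fin dB) ℂ :=
  msqrt ρ * (((msqrt (ptrace ρ))⁻¹ * ω * (msqrt (ptrace ρ))⁻¹) ⊗ₖ
    (1 : Matrix (Fin dB) (Fin dB) ℂ)) * msqrt ρ

/-- Condition S: `ρ` is positive definite and separable of the form
`ρ = ∑ i, α i • (x i x i† ⊗ ρ_B i)` for an orthonormal basis `x` of `ℂ^{dA}`, `α i > 0`,
density matrices `ρ_B i`, and `ω` commutes with `Tr_B ρ`. -/
def CondS {dA dB : ℕ} (ω : Matrix (Fin dA) (Fin dA) ℂ)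
    (ρ : Matrix (Fin dA × Fin dB) (Fin dA × Fin dB) ℂ) : Prop :=
  ρ.PosDef ∧
  (∃ (x : Fin dA → (Fin dA → ℂ)) (α : Fin dA → ℝ) (σ : Fin dA → Matrix (Fin dB) (Fin dB) ℂ),
    (∀ i j, star (x i) ⬝ᵥ x j = if i = j then 1 else 0) ∧
    (∀ i, 0 < α i) ∧ (∀ i, IsDensityMatrix (σ i)) ∧
    ρ = ∑ i, (α i : ℂ) • (Matrix.vecMulVec (x i) (star (x i)) ⊗ₖ σ i)) ∧
  ω * ptrace ρ = ptrace ρ * ω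

/-- A matrix on a product index type is block diagonal with respect to the first factor. -/
def BlockDiagFst {α β : Type*} (M : Matrix (α × β) (α × β) ℂ) : Prop :=
  ∀ u a v b, u ≠ v → M (u, a) (v, b) = 0

/-- The `i`-th diagonal block of a matrix on a product index type. -/
def blockFst {α β : Type*} (M : Matrix (α × β) (α × β) ℂ) (i : α) : Matrix β β ℂ :=
  Matrix.of fun k l => M (i, k) (i, l)

/-- The Pauli Z matrix. -/
def pauliZ : Matrix (Fin 2) (Fin 2) ℂ := !![1, 0; 0, -1]

/-- The Pauli X matrix. -/
def pauliX : Matrix (Fin 2) (Fin 2) ℂ := !![0, 1; 1, 0]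

/-- The single-site operator `I^{⊗(i-1)} ⊗ σ ⊗ I^{⊗(N-i)}` acting on qubit `i` of `N` qubits,
with `(ℂ²)^{⊗N}` realized as matrices indexed by functions `Fin N → Fin 2`. -/
def pauliAt {N : ℕ} (σ : Matrix (Fin 2) (Fin 2) ℂ) (i : Fin N) :
    Matrix (Fin N → Fin 2) (Fin N → Fin 2) ℂ :=
  Matrix.of fun f g =>
    (∏ j ∈ Finset.univ.erase i, if f j = g j then (1 : ℂ) else 0) * σ (f i) (g i)

/-- The identification `(ℂ²)^{⊗(m+n)} ≅ ℂ^{2^m} ⊗ ℂ^{2^n}` at the level of index types: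
bit strings on `m + n` qubits correspond to pairs of bit strings. -/
def qubitSplit (m n : ℕ) : (Fin (m + n) → Fin 2) ≃ ((Fin m → Fin 2) × (Fin n → Fin 2)) :=
  (Equiv.arrowCongr finSumFinEquiv.symm (Equiv.refl (Fin 2))).trans
    (Equiv.sumArrowEquivProdArrow (Fin m) (Fin n) (Fin 2))

/-- `σ^k_i` on `m + n` qubits, viewed as a matrix on `ℂ^{2^m} ⊗ ℂ^{2^n}`. -/
def pauliAtSplit (m n : ℕ) (σ : Matrix (Fin 2) (Fin 2) ℂ) (i : Fin (m + n)) :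
    Matrix ((Fin m → Fin 2) × (Fin n → Fin 2)) ((Fin m → Fin 2) × (Fin n → Fin 2)) ℂ :=
  (pauliAt σ i).reindex (qubitSplit m n) (qubitSplit m n)

lemma pauliZ_offdiag {a c : Fin 2} (h : a ≠ c) : pauliZ a c = 0 := by
  fin_cases a <;> fin_cases c <;> simp_all [pauliZ]

lemma pauliAt_of_agree_ne {N : ℕ} (σ : Matrix (Fin 2) (Fin 2) ℂ) (i j : Fin N)
    (hji : j ≠ i) {f g : Fin N → Fin 2} (h : f j ≠ g j) : pauliAt σ i f g = 0 := by
  unfold pauliAt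
  simp only [Matrix.of_apply]
  have h0 : (if f j = g j then (1 : ℂ) else 0) = 0 := if_neg h
  rw [Finset.prod_eq_zero (Finset.mem_erase.mpr ⟨hji, Finset.mem_univ j⟩) h0, zero_mul]

lemma pauliAtZ_offdiag {N : ℕ} (i : Fin N) {f g : Fin N → Fin 2} (h : f ≠ g) :
    pauliAt pauliZ i f g = 0 := by
  obtain ⟨j, hj⟩ := Function.ne_iff.mp h
  by_cases hji : j = i
  · subst hji
    unfold pauliAt
    simp only [Matrix.of_apply]
    rw [pauliZ_offdiag hj, mul_zero]
  · exact pauliAt_of_agree_ne _ _ _ hji hj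

lemma pauliAtZZ_offdiag {N : ℕ} (i j : Fin N) {f g : Fin N → Fin 2} (h : f ≠ g) :
    (pauliAt pauliZ i * pauliAt pauliZ j) f g = 0 := by
  rw [Matrix.mul_apply]
  apply Finset.sum_eq_zero
  intro k _
  by_cases hk : f = k
  · subst hk
    rw [pauliAtZ_offdiag j h, mul_zero]
  · rw [pauliAtZ_offdiag i hk, zero_mul]

lemma qubitSplit_symm_castAdd (m n : ℕ) (p : (Fin m → Fin 2) × (Fin n → Fin 2)) (k : Fin m) :
    (qubitSplit m n).symm p (Fin.castAdd n k) = p.1 k := by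
  simp [qubitSplit, Equiv.sumArrowEquivProdArrow, Equiv.arrowCongr]

lemma qubitSplit_fst (m n : ℕ) (f : Fin (m + n) → Fin 2) (k : Fin m) :
    (qubitSplit m n f).1 k = f (Fin.castAdd n k) := by
  simp [qubitSplit, Equiv.sumArrowEquivProdArrow, Equiv.arrowCongr]

lemma pauliAtSplit_mul (m n : ℕ) (σ τ : Matrix (Fin 2) (Fin 2) ℂ) (i j : Fin (m + n)) :
    pauliAtSplit m n σ i * pauliAtSplit m n τ j =
      (pauliAt σ i * pauliAt τ j).reindex (qubitSplit m n) (qubitSplit m n) := by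
  rw [pauliAtSplit, pauliAtSplit, Matrix.reindex_apply, Matrix.reindex_apply,
    Matrix.submatrix_mul_equiv, Matrix.reindex_apply]

/-- The QBM is a CQ-LVM iff the transverse field vanishes on the
visible units. -/
theorem qbm_cqlvm_iff (m n : ℕ) (hm : 1 ≤ m) (hn : 1 ≤ n)
    (b Γ : Fin (m + n) → ℝ) (w : Fin (m + n) → Fin (m + n) → ℝ)
    (H : Matrix ((Fin m → Fin 2) × (Fin n → Fin 2)) ((Fin m → Fin 2) × (Fin n → Fin 2)) ℂ)
    (hH : H = -(∑ i : Fin (m + n), (b i : ℂ) • pauliAtSplit m n pauliZ i)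
        - ∑ i : Fin (m + n), ∑ j ∈ Finset.univ.filter (· < i),
            (w i j : ℂ) • (pauliAtSplit m n pauliZ i * pauliAtSplit m n pauliZ j)
        - ∑ i : Fin (m + n), (Γ i : ℂ) • pauliAtSplit m n pauliX i) :
    BlockDiagFst H ↔ ∀ i : Fin (m + n), (i : ℕ) < m → Γ i = 0 := by
  constructor
  · intro hBD i hi
    set g0 : Fin (m + n) → Fin 2 := fun _ => 0 with hg0
    set f : Fin (m + n) → Fin 2 := Function.update g0 i 1 with hfdef
    have hfi : f i = 1 := Function.update_self i 1 g0
    have hfj : ∀ j, j ≠ i → f j = 0 := fun j hj => Function.update_of_ne hj 1 g0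
    have hfg : f ≠ g0 := by
      intro hc
      have h1 := congrFun hc i
      rw [hfi] at h1
      exact one_ne_zero h1
    have hne : (qubitSplit m n f).1 ≠ (qubitSplit m n g0).1 := by
      intro hcontra
      have h1 := congrFun hcontra ⟨(i : ℕ), hi⟩
      rw [qubitSplit_fst, qubitSplit_fst] at h1
      have hci : Fin.castAdd n (⟨(i : ℕ), hi⟩ : Fin m) = i := Fin.ext rfl
      rw [hci, hfi] at h1
      exact one_ne_zero h1
    unfold BlockDiagFst at hBD
    have key : H (qubitSplit m n f) (qubitSplit m n g0) = 0 :=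
      hBD (qubitSplit m n f).1 (qubitSplit m n f).2 (qubitSplit m n g0).1
        (qubitSplit m n g0).2 hne
    rw [hH] at key
    simp only [Matrix.sub_apply, Matrix.neg_apply, Matrix.sum_apply, Matrix.smul_apply,
      pauliAtSplit_mul, smul_eq_mul] at key
    simp only [pauliAtSplit, Matrix.reindex_apply, Matrix.submatrix_apply,
      Equiv.symm_apply_apply] at key
    have hX : ∀ j, j ≠ i → pauliAt pauliX j f g0 = 0 := by
      intro j hj
      refine pauliAt_of_agree_ne pauliX j i (Ne.symm hj) ?_
      intro hc
      rw [hfi] at hc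
      exact one_ne_zero hc
    have hXi : pauliAt pauliX i f g0 = 1 := by
      show (∏ j ∈ Finset.univ.erase i, if f j = g0 j then (1 : ℂ) else 0)
        * pauliX (f i) (g0 i) = 1
      have hp : ∀ j ∈ Finset.univ.erase i, (if f j = g0 j then (1 : ℂ) else 0) = 1 := by
        intro j hj
        exact if_pos (by rw [hfj j (Finset.mem_erase.mp hj).1])
      rw [Finset.prod_eq_one hp, one_mul, hfi]
      show pauliX 1 0 = 1
      simp [pauliX]
    have e1 : ∑ j : Fin (m + n), (b j : ℂ) * pauliAt pauliZ j f g0 = 0 :=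
      Finset.sum_eq_zero fun j _ => by rw [pauliAtZ_offdiag j hfg, mul_zero]
    have e2 : ∑ j : Fin (m + n), ∑ l ∈ Finset.univ.filter (· < j),
        (w j l : ℂ) * (pauliAt pauliZ j * pauliAt pauliZ l) f g0 = 0 :=
      Finset.sum_eq_zero fun j _ => Finset.sum_eq_zero fun l _ => by
        rw [pauliAtZZ_offdiag j l hfg, mul_zero]
    have e3 : ∑ j : Fin (m + n), (Γ j : ℂ) * pauliAt pauliX j f g0 = (Γ i : ℂ) := by
      rw [Finset.sum_eq_single i]
      · rw [hXi, mul_one]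
      · intro j _ hj
        rw [hX j hj, mul_zero]
      · intro hmem
        exact absurd (Finset.mem_univ i) hmem
    rw [e1, e2, e3] at key
    have hc : (Γ i : ℂ) = 0 := by linear_combination -key
    exact_mod_cast hc
  · intro hΓ
    rw [hH]
    unfold BlockDiagFst
    intro u a v c huv
    obtain ⟨k, hk⟩ := Function.ne_iff.mp huv
    simp only [Matrix.sub_apply, Matrix.neg_apply, Matrix.sum_apply, Matrix.smul_apply,
      pauliAtSplit_mul, smul_eq_mul]
    simp only [pauliAtSplit, Matrix.reindex_apply, Matrix.submatrix_apply]
    set f : Fin (m + n) → Fin 2 := (qubitSplit m n).symm (u, a) with hf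
    set g : Fin (m + n) → Fin 2 := (qubitSplit m n).symm (v, c) with hg
    have hfg : f ≠ g := by
      intro hc
      exact huv (congrArg Prod.fst ((qubitSplit m n).symm.injective hc))
    have hfk : f (Fin.castAdd n k) = u k := qubitSplit_symm_castAdd m n (u, a) k
    have hgk : g (Fin.castAdd n k) = v k := qubitSplit_symm_castAdd m n (v, c) k
    have hX : ∀ i : Fin (m + n), (Γ i : ℂ) * pauliAt pauliX i f g = 0 := by
      intro i
      by_cases hi : (i : ℕ) < m
      · rw [hΓ i hi]
        simp
      · have hki : Fin.castAdd n k ≠ i := by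
          intro hc
          apply hi
          rw [← hc]
          exact k.isLt
        rw [pauliAt_of_agree_ne pauliX i (Fin.castAdd n k) hki (by rw [hfk, hgk]; exact hk),
          mul_zero]
    have e1 : ∑ j : Fin (m + n), (b j : ℂ) * pauliAt pauliZ j f g = 0 :=
      Finset.sum_eq_zero fun j _ => by rw [pauliAtZ_offdiag j hfg, mul_zero]
    have e2 : ∑ j : Fin (m + n), ∑ l ∈ Finset.univ.filter (· < j),
        (w j l : ℂ) * (pauliAt pauliZ j * pauliAt pauliZ l) f g = 0 :=
      Finset.sum_eq_zero fun j _ => Finset.sum_eq_zero fun l _ => by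
        rw [pauliAtZZ_offdiag j l hfg, mul_zero]
    have e3 : ∑ j : Fin (m + n), (Γ j : ℂ) * pauliAt pauliX j f g = 0 :=
      Finset.sum_eq_zero fun j _ => hX j
    rw [e1, e2, e3]
    ring
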